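/- Let $X$ be an $m \times n$ matrix of distinct indeterminates over a field $k$. Then the quotient of the polynomial ring $k[x_{ij}]$ by the ideal generated by all $2\times 2$ minors of $X$ is isomorphic as a $k$-algebra to the subring $k[s_i t_j \mid 1 \le i \le m, 1 \le j \le n]$ of $k[s_1,\dots,s_m,t_1,\dots,t_n]$, via $x_{ij} \mapsto s_i t_j$. -/

import Mathlib

open MvPolynomial

/-- The ideal generated by all 2×2 minors of a matrix. -/
def minors2 {R : Type*} [CommRing R] {α β : Type*} (M : Matrix α β R) : Ideal R :=
  Ideal.span { p | ∃ i i' j j', p = M i j * M i' j' - M i j' * M i' j }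

namespace SegreAux

variable {k : Type*} [CommRing k] {m n : ℕ}

/-- The algebra map `k[x_{ij}] → k[s,t]`, `x_{ij} ↦ s_i t_j`. -/
noncomputable def phi (k : Type*) [CommRing k] (m n : ℕ) :
    MvPolynomial (Fin m × Fin n) k →ₐ[k] MvPolynomial (Fin m ⊕ Fin n) k :=
  aeval fun p => X (Sum.inl p.1) * X (Sum.inr p.2)

/-- The ideal of 2×2 minors of the generic matrix. -/
noncomputable def Ig (k : Type*) [CommRing k] (m n : ℕ) : Ideal (MvPolynomial (Fin m × Fin n) k) :=
  minors2 (Matrix.of fun (i : Fin m) (j : Fin n) => (X (i, j) : MvPolynomial (Fin m × Fin n) k))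

/-- Row/column margins of an exponent vector. -/
noncomputable def sig (d : (Fin m × Fin n) →₀ ℕ) : (Fin m ⊕ Fin n) →₀ ℕ :=
  Finsupp.equivFunOnFinite.symm (Sum.elim (fun i => ∑ j, d (i, j)) (fun j => ∑ i, d (i, j)))

@[simp] lemma sig_inl (d : (Fin m × Fin n) →₀ ℕ) (i : Fin m) :
    sig d (Sum.inl i) = ∑ j, d (i, j) := by simp [sig]

@[simp] lemma sig_inr (d : (Fin m × Fin n) →₀ ℕ) (j : Fin n) :
    sig d (Sum.inr j) = ∑ i, d (i, j) := by simp [sig]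

lemma sig_add (a b : (Fin m × Fin n) →₀ ℕ) : sig (a + b) = sig a + sig b := by
  ext v; cases v <;> simp [Finset.sum_add_distrib]

lemma sig_single (i : Fin m) (j : Fin n) :
    sig (Finsupp.single (i, j) 1) =
      Finsupp.single (Sum.inl i) 1 + Finsupp.single (Sum.inr j) 1 := by
  ext v
  cases v with
  | inl r =>
    simp only [sig_inl, Finsupp.add_apply, Finsupp.single_apply, Prod.mk.injEq]
    by_cases h : i = r <;> simp [h, Finsupp.single_apply]
  | inr c =>
    simp only [sig_inr, Finsupp.add_apply, Finsupp.single_apply, Prod.mk.injEq]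
    by_cases h : j = c <;> simp [h, Finsupp.single_apply]

lemma phi_monomial (d : (Fin m × Fin n) →₀ ℕ) (c : k) :
    phi k m n (monomial d c) = monomial (sig d) c := by
  rw [phi, aeval_monomial, monomial_eq, MvPolynomial.algebraMap_eq]
  congr 1
  rw [Finsupp.prod_fintype _ _ (by simp), Finsupp.prod_fintype _ _ (by simp)]
  rw [Fintype.prod_sum_type]
  simp only [sig_inl, sig_inr, mul_pow]
  rw [Finset.prod_mul_distrib, Fintype.prod_prod_type, Fintype.prod_prod_type]
  simp [Finset.prod_pow_eq_pow_sum, Finset.prod_comm (s := Finset.univ) (t := Finset.univ)]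

lemma sum4 {α : Type*} [Fintype α] [DecidableEq α] (a b c e : α)
    (hab : a ≠ b) (hac : a ≠ c) (hae : a ≠ e) (hbc : b ≠ c) (hbe : b ≠ e) (hce : c ≠ e)
    (g : α → ℕ) :
    ∑ x, g x = g a + g b + g c + g e + ∑ x ∈ Finset.univ \ {a, b, c, e}, g x := by
  rw [← Finset.sum_sdiff (Finset.subset_univ ({a, b, c, e} : Finset α))]
  have : ∑ x ∈ ({a, b, c, e} : Finset α), g x = g a + g b + g c + g e := by
    rw [Finset.sum_insert (by simp [hab, hac, hae]),
      Finset.sum_insert (by simp [hbc, hbe]), Finset.sum_insert (by simp [hce]),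
      Finset.sum_singleton]
    ring
  omega

/-- Distance between two exponent vectors. -/
noncomputable def delta (d d' : (Fin m × Fin n) →₀ ℕ) : ℕ :=
  ∑ p : Fin m × Fin n, ((d p - d' p) + (d' p - d p))

lemma X_eq_monomial (p : Fin m × Fin n) :
    (X p : MvPolynomial (Fin m × Fin n) k) = monomial (Finsupp.single p 1) 1 := rfl

/-- Key lemma: two monomials with the same row and column margins are congruent
modulo the ideal of 2×2 minors. -/
lemma key (N : ℕ) : ∀ d d' : (Fin m × Fin n) →₀ ℕ, delta d d' ≤ N → sig d = sig d' →
    (monomial d 1 - monomial d' 1 : MvPolynomial (Fin m × Fin n) k) ∈ Ig k m n := by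
  induction N with
  | zero =>
    intro d d' hN _
    have : d = d' := by
      ext p
      have h0 : delta d d' = 0 := Nat.le_zero.mp hN
      rw [delta, Finset.sum_eq_zero_iff] at h0
      have := h0 p (Finset.mem_univ p)
      omega
    rw [this, sub_self]
    exact zero_mem _
  | succ N ih =>
    intro d d' hN hsig
    by_cases hdd : d = d'
    · rw [hdd, sub_self]; exact zero_mem _
    have hrow : ∀ i, ∑ j, d (i, j) = ∑ j, d' (i, j) := fun i => by
      have := DFunLike.congr_fun hsig (Sum.inl i); simpa using this
    have hcol : ∀ j, ∑ i, d (i, j) = ∑ i, d' (i, j) := fun j => by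
      have := DFunLike.congr_fun hsig (Sum.inr j); simpa using this
    have htot : ∑ p : Fin m × Fin n, d p = ∑ p : Fin m × Fin n, d' p := by
      rw [Fintype.sum_prod_type, Fintype.sum_prod_type]
      exact Finset.sum_congr rfl fun i _ => hrow i
    have hex : ∃ p : Fin m × Fin n, d' p < d p := by
      by_contra hno
      push_neg at hno
      refine hdd ?_
      ext p
      by_contra hne
      have hlt : d p < d' p := lt_of_le_of_ne (hno p) hne
      have := Finset.sum_lt_sum (fun q (_ : q ∈ Finset.univ) => hno q)
        ⟨p, Finset.mem_univ p, hlt⟩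
      omega
    obtain ⟨⟨i, j⟩, hij⟩ := hex
    have hexj' : ∃ j', d (i, j') < d' (i, j') := by
      by_contra hno; push_neg at hno
      have := Finset.sum_lt_sum (fun q (_ : q ∈ Finset.univ) => hno q)
        ⟨j, Finset.mem_univ j, hij⟩
      have h2 := hrow i; omega
    obtain ⟨j', hj'⟩ := hexj'
    have hexi' : ∃ i', d' (i', j') < d (i', j') := by
      by_contra hno; push_neg at hno
      have := Finset.sum_lt_sum (fun q (_ : q ∈ Finset.univ) => hno q)
        ⟨i, Finset.mem_univ i, hj'⟩
      have h2 := hcol j'; omega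
    obtain ⟨i', hi'⟩ := hexi'
    have hii : i ≠ i' := by rintro rfl; omega
    have hjj : j ≠ j' := by rintro rfl; omega
    set a : Fin m × Fin n := (i, j) with ha
    set b : Fin m × Fin n := (i', j') with hb
    set cc : Fin m × Fin n := (i, j') with hcc
    set ee : Fin m × Fin n := (i', j) with hee
    have hab : a ≠ b := fun h => hii (congrArg Prod.fst h)
    have hac : a ≠ cc := fun h => hjj (congrArg Prod.snd h)
    have hae : a ≠ ee := fun h => hii (congrArg Prod.fst h)
    have hbc : b ≠ cc := fun h => hii (congrArg Prod.fst h).symm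
    have hbe : b ≠ ee := fun h => hjj (congrArg Prod.snd h).symm
    have hce : cc ≠ ee := fun h => hii (congrArg Prod.fst h)
    set u : (Fin m × Fin n) →₀ ℕ := Finsupp.single a 1 + Finsupp.single b 1 with hu
    have hle : u ≤ d := by
      rw [Finsupp.le_def]
      intro p
      rw [hu, Finsupp.add_apply, Finsupp.single_apply, Finsupp.single_apply]
      by_cases h1 : a = p
      · by_cases h2 : b = p
        · exact absurd (h1.trans h2.symm) hab
        · subst h1; simp [h2]; omega
      · by_cases h2 : b = p
        · subst h2; simp [h1]; omega
        · simp [h1, h2]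
    set d0 : (Fin m × Fin n) →₀ ℕ := d - u with hd0
    have hd : d0 + u = d := tsub_add_cancel_of_le hle
    set d2 : (Fin m × Fin n) →₀ ℕ := d0 + (Finsupp.single cc 1 + Finsupp.single ee 1) with hd2
    have hsig2 : sig d2 = sig d := by
      conv_rhs => rw [← hd]
      rw [hd2, hu, sig_add, sig_add, sig_add, sig_add, ha, hb, hcc, hee,
        sig_single, sig_single, sig_single, sig_single]
      abel
    have hval : ∀ p, d2 p = d p - ((if a = p then 1 else 0) + (if b = p then 1 else 0))
        + ((if cc = p then 1 else 0) + (if ee = p then 1 else 0)) := by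
      intro p
      rw [hd2, hd0, hu]
      simp [Finsupp.tsub_apply, Finsupp.add_apply, Finsupp.single_apply]
    have hvala : d2 a = d a - 1 := by
      rw [hval a]; simp [Ne.symm hab, Ne.symm hac, Ne.symm hae, hab.symm]
    have hvalb : d2 b = d b - 1 := by
      rw [hval b]; simp [hab, Ne.symm hbc, Ne.symm hbe]
    have hvalc : d2 cc = d cc + 1 := by
      rw [hval cc]; simp [hac, hbc, Ne.symm hce]
    have hvale : d2 ee = d ee + 1 := by
      rw [hval ee]; simp [hae, hbe, hce]
    have hrest : ∀ p ∈ Finset.univ \ ({a, b, cc, ee} : Finset (Fin m × Fin n)), d2 p = d p := by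
      intro p hp
      simp only [Finset.mem_sdiff, Finset.mem_insert, Finset.mem_singleton] at hp
      push_neg at hp
      obtain ⟨-, h1, h2, h3, h4⟩ := hp
      rw [hval p]
      simp [Ne.symm h1, Ne.symm h2, Ne.symm h3, Ne.symm h4]
    have hlt : delta d2 d' < delta d d' := by
      rw [delta, delta,
        sum4 a b cc ee hab hac hae hbc hbe hce,
        sum4 a b cc ee hab hac hae hbc hbe hce]
      have hR : ∑ x ∈ Finset.univ \ ({a, b, cc, ee} : Finset (Fin m × Fin n)),
          ((d2 x - d' x) + (d' x - d2 x))
          = ∑ x ∈ Finset.univ \ ({a, b, cc, ee} : Finset (Fin m × Fin n)),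
          ((d x - d' x) + (d' x - d x)) :=
        Finset.sum_congr rfl fun p hp => by rw [hrest p hp]
      rw [hR]
      have h1 : d' a < d a := hij
      have h2 : d' b < d b := hi'
      have h3 : d cc < d' cc := hj'
      omega
    have hmond : (monomial d 1 : MvPolynomial (Fin m × Fin n) k)
        = monomial d0 1 * (X a * X b) := by
      rw [X_eq_monomial, X_eq_monomial, monomial_mul, monomial_mul, ← hd, hu]
      simp [add_assoc]
    have hmond2 : (monomial d2 1 : MvPolynomial (Fin m × Fin n) k)
        = monomial d0 1 * (X cc * X ee) := by
      rw [X_eq_monomial, X_eq_monomial, monomial_mul, monomial_mul, hd2]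
      simp [add_assoc]
    have hgen : (X a * X b - X cc * X ee : MvPolynomial (Fin m × Fin n) k) ∈ Ig k m n :=
      Ideal.subset_span ⟨i, i', j, j', by simp [ha, hb, hcc, hee]⟩
    have hmem1 : (monomial d 1 - monomial d2 1 : MvPolynomial (Fin m × Fin n) k)
        ∈ Ig k m n := by
      rw [hmond, hmond2, ← mul_sub]
      exact Ideal.mul_mem_left _ _ hgen
    have hmem2 := ih d2 d' (by omega) (hsig2.trans hsig)
    have : (monomial d 1 - monomial d' 1 : MvPolynomial (Fin m × Fin n) k)
        = (monomial d 1 - monomial d2 1) + (monomial d2 1 - monomial d' 1) := by ring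
    rw [this]
    exact add_mem hmem1 hmem2

/-- The kernel of `phi` is contained in the ideal of minors. -/
lemma ker_le (N : ℕ) : ∀ f : MvPolynomial (Fin m × Fin n) k,
    f.support.card ≤ N → phi k m n f = 0 → f ∈ Ig k m n := by
  induction N with
  | zero =>
    intro f hN _
    have : f = 0 := by
      rwa [Nat.le_zero, Finset.card_eq_zero, support_eq_empty] at hN
    rw [this]; exact zero_mem _
  | succ N ih =>
    intro f hN hf
    by_cases hf0 : f = 0
    · rw [hf0]; exact zero_mem _
    obtain ⟨d, hd⟩ := (support_nonempty.mpr hf0)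
    have hcd : coeff d f ≠ 0 := mem_support_iff.mp hd
    have hexp : phi k m n f = ∑ v ∈ f.support, monomial (sig v) (coeff v f) := by
      conv_lhs => rw [f.as_sum]
      rw [map_sum]
      exact Finset.sum_congr rfl fun v _ => phi_monomial v _
    have hsum : ∑ v ∈ f.support, (if sig v = sig d then coeff v f else 0) = 0 := by
      have h1 : coeff (sig d) (phi k m n f) = 0 := by rw [hf]; simp
      rw [hexp, coeff_sum] at h1
      simpa [coeff_monomial] using h1
    have hex : ∃ d', d' ∈ f.support ∧ d' ≠ d ∧ sig d' = sig d := by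
      by_contra h
      push_neg at h
      have h2 : ∑ v ∈ f.support, (if sig v = sig d then coeff v f else 0)
          = if sig d = sig d then coeff d f else 0 := by
        refine Finset.sum_eq_single_of_mem d hd fun b hb hbd => ?_
        rcases eq_or_ne (sig b) (sig d) with h' | h'
        · exact absurd h' (h b hb hbd)
        · simp [h']
      rw [hsum, if_pos rfl] at h2
      exact hcd h2.symm
    obtain ⟨d', hd'su, hd'ne, hd'sig⟩ := hex
    set c := coeff d f with hc
    set g := f - C c * (monomial d 1 - monomial d' 1) with hg
    have hCc : C c * ((monomial d 1 : MvPolynomial (Fin m × Fin n) k) - monomial d' 1)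
        = monomial d c - monomial d' c := by
      rw [mul_sub, C_mul_monomial, C_mul_monomial, mul_one]
    have hgsupp : g.support ⊆ f.support.erase d := by
      intro p hp
      rw [Finset.mem_erase]
      rw [mem_support_iff] at hp
      constructor
      · rintro rfl
        apply hp
        rw [hg, hCc]
        simp [coeff_sub, coeff_monomial, hd'ne, hc]
      · rw [mem_support_iff]
        intro h0
        apply hp
        have hpd : d ≠ p := by rintro rfl; exact hcd h0
        have hpd' : d' ≠ p := by rintro rfl; exact (mem_support_iff.mp hd'su) h0
        rw [hg, hCc]
        simp [coeff_sub, coeff_monomial, hpd, hpd', h0]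
    have hcard : g.support.card ≤ N := by
      have h1 := Finset.card_le_card hgsupp
      have h2 := Finset.card_erase_of_mem hd
      omega
    have hphig : phi k m n g = 0 := by
      rw [hg, map_sub, hf, map_mul, map_sub, phi_monomial, phi_monomial, hd'sig, sub_self,
        mul_zero, sub_zero]
    have hgI : g ∈ Ig k m n := ih g hcard hphig
    have hkey : (monomial d 1 - monomial d' 1 : MvPolynomial (Fin m × Fin n) k) ∈ Ig k m n :=
      key (delta d d') d d' le_rfl hd'sig.symm
    have : f = g + C c * (monomial d 1 - monomial d' 1) := by rw [hg]; ring
    rw [this]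
    exact add_mem hgI (Ideal.mul_mem_left _ _ hkey)

lemma ker_eq : RingHom.ker (phi k m n) = Ig k m n := by
  apply le_antisymm
  · intro f hf
    exact ker_le f.support.card f le_rfl (RingHom.mem_ker.mp hf)
  · rw [Ig, minors2]
    refine Ideal.span_le.mpr ?_
    rintro p ⟨i, i', j, j', rfl⟩
    simp only [SetLike.mem_coe, RingHom.mem_ker, Matrix.of_apply, map_sub, map_mul]
    rw [phi]
    simp only [aeval_X]
    ring

lemma range_eq : (phi k m n).range
    = Algebra.adjoin k {p : MvPolynomial (Fin m ⊕ Fin n) k |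
        ∃ i j, p = X (Sum.inl i) * X (Sum.inr j)} := by
  rw [phi, ← Algebra.adjoin_range_eq_range_aeval]
  congr 1
  ext q
  constructor
  · rintro ⟨⟨i, j⟩, rfl⟩; exact ⟨i, j, rfl⟩
  · rintro ⟨i, j, rfl⟩; exact ⟨(i, j), rfl⟩

end SegreAux

/-- The quotient of `k[x_{ij}]` by the 2×2 minors of the generic `m × n` matrix is
isomorphic as a `k`-algebra to the subalgebra `k[s_i t_j]` of `k[s, t]`, via
`x_{ij} ↦ s_i t_j`. -/
theorem quotient_minors2_iso_segre (k : Type*) [Field k] (m n : ℕ) (hm : 1 ≤ m) (hn : 1 ≤ n)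
    (X : Matrix (Fin m) (Fin n) (MvPolynomial (Fin m × Fin n) k))
    (hX : ∀ i j, X i j = MvPolynomial.X (i, j))
    (s : Fin m → MvPolynomial (Fin m ⊕ Fin n) k)
    (t : Fin n → MvPolynomial (Fin m ⊕ Fin n) k)
    (hs : ∀ i, s i = MvPolynomial.X (Sum.inl i))
    (ht : ∀ j, t j = MvPolynomial.X (Sum.inr j)) :
    ∃ e : (MvPolynomial (Fin m × Fin n) k ⧸ minors2 X) ≃ₐ[k]
        (Algebra.adjoin k { p | ∃ i j, p = s i * t j }),
      ∀ i j, (e (Ideal.Quotient.mk (minors2 X) (X i j)) : MvPolynomial (Fin m ⊕ Fin n) k)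
        = s i * t j := by
  have hXe : X = Matrix.of fun i j => MvPolynomial.X (i, j) := Matrix.ext fun i j => hX i j
  subst hXe
  have hse : s = fun i => MvPolynomial.X (Sum.inl i) := funext hs
  have hte : t = fun j => MvPolynomial.X (Sum.inr j) := funext ht
  subst hse hte
  set A := Algebra.adjoin k { p : MvPolynomial (Fin m ⊕ Fin n) k |
    ∃ i j, p = MvPolynomial.X (Sum.inl i) * MvPolynomial.X (Sum.inr j) } with hA
  have hrange : (SegreAux.phi k m n).range = A := SegreAux.range_eq
  have hmem : ∀ x, SegreAux.phi k m n x ∈ A := fun x => hrange ▸ ⟨x, rfl⟩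
  set phc : MvPolynomial (Fin m × Fin n) k →ₐ[k] A :=
    (SegreAux.phi k m n).codRestrict A hmem with hphc
  have hsurj : Function.Surjective phc := by
    rintro ⟨y, hy⟩
    rw [← hrange] at hy
    obtain ⟨x, hx⟩ := hy
    exact ⟨x, Subtype.ext hx⟩
  have hker2 : RingHom.ker phc = minors2 (Matrix.of fun i j =>
      (MvPolynomial.X (i, j) : MvPolynomial (Fin m × Fin n) k)) := by
    rw [show minors2 (Matrix.of fun i j => (MvPolynomial.X (i, j) :
        MvPolynomial (Fin m × Fin n) k)) = SegreAux.Ig k m n from rfl,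
      ← SegreAux.ker_eq (k := k) (m := m) (n := n)]
    ext x
    simp only [RingHom.mem_ker]
    constructor
    · intro h
      have := congrArg (Subtype.val) h
      simpa [hphc] using this
    · intro h
      exact Subtype.ext (by simpa [hphc] using h)
  refine ⟨(Ideal.quotientEquivAlgOfEq k hker2.symm).trans
    (Ideal.quotientKerAlgEquivOfSurjective hsurj), ?_⟩
  intro i j
  have h1 : ((Ideal.quotientEquivAlgOfEq k hker2.symm).trans
      (Ideal.quotientKerAlgEquivOfSurjective hsurj))
      (Ideal.Quotient.mk (minors2 (Matrix.of fun i j =>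
        (MvPolynomial.X (i, j) : MvPolynomial (Fin m × Fin n) k)))
        ((Matrix.of fun i j => (MvPolynomial.X (i, j) :
          MvPolynomial (Fin m × Fin n) k)) i j))
      = phc (MvPolynomial.X (i, j)) := by
    rw [AlgEquiv.trans_apply, Ideal.quotientEquivAlgOfEq_mk]
    exact Ideal.quotientKerAlgEquivOfSurjective_apply hsurj _
  rw [h1]
  simp [hphc, SegreAux.phi]
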